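/- Let p, q, u, v be pairwise coprime positive integers, N = pquv, r₁ = pu, s₁ = qv, r₂ = pv, s₂ = qu, and let σ_{1/r₁}, σ_{1/r₂} ∈ SL₂(ℝ) be the Atkin–Lehner scaling matrices of the cusps 1/r₁ and 1/r₂. Then a positive real number γ occurs as the lower-left entry of some element of σ_{1/r₁}⁻¹ · Γ₀(N) · σ_{1/r₂} if and only if γ = c·√(uv) for some positive integer c with pq ∣ c and gcd(c, uv) = 1. -/

import Mathlib

open Matrix

lemma sigma_inv_aux (S B R s : ℝ) (hs : 0 < s) (hdet : S - R * B = 1)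
    (σ : Matrix (Fin 2) (Fin 2) ℝ) (hσ : σ = !![1, B; R, S] * !![s, 0; 0, s⁻¹]) :
    σ⁻¹ = !![s⁻¹ * S, -(s⁻¹ * B); -(s * R), s] := by
  have hs' : s ≠ 0 := ne_of_gt hs
  apply Matrix.inv_eq_left_inv
  rw [hσ]
  ext i j
  fin_cases i <;> fin_cases j
  all_goals try simp [Matrix.mul_fin_two, Matrix.one_apply]
  all_goals try field_simp
  all_goals first
    | linear_combination hdet
    | linear_combination -hdet
    | linear_combination (s - 1) * hdet
    | linear_combination (1 - s) * hdet
    | linear_combination s * hdet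
    | ring

lemma entry_aux (S₁ B₁ R₁ s S₂ B₂ R₂ t : ℝ) (hs : 0 < s)
    (hdet₁ : S₁ - R₁ * B₁ = 1)
    (σ₁ σ₂ : Matrix (Fin 2) (Fin 2) ℝ)
    (hσ₁ : σ₁ = !![1, B₁; R₁, S₁] * !![s, 0; 0, s⁻¹])
    (hσ₂ : σ₂ = !![1, B₂; R₂, S₂] * !![t, 0; 0, t⁻¹])
    (a b c d : ℝ) :
    (σ₁⁻¹ * !![a, b; c, d] * σ₂) 1 0 =
      (s * t) * (c - R₁ * a - R₁ * R₂ * b + R₂ * d) := by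
  rw [sigma_inv_aux S₁ B₁ R₁ s hs hdet₁ σ₁ hσ₁, hσ₂]
  simp [Matrix.mul_fin_two]
  ring

/-- **Allowed moduli for the pair of Atkin–Lehner cusps `1/r₁`, `1/r₂`**
(Equation (2.11) of the paper): a positive real `γ` occurs as the lower-left entry of an
element of `σ_{1/r₁}⁻¹ Γ₀(N) σ_{1/r₂}` iff `γ = c√(uv)` with `pq ∣ c` and `(c, uv) = 1`. -/
theorem stmt_1 (p q u v : ℤ) (hp : 0 < p) (hq : 0 < q) (hu : 0 < u) (hv : 0 < v)
    (hpq : IsCoprime p q) (hpu : IsCoprime p u) (hpv : IsCoprime p v)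
    (hqu : IsCoprime q u) (hqv : IsCoprime q v) (huv : IsCoprime u v)
    (sbar₁ sbar₂ b₁ b₂ : ℤ)
    (h₁ : sbar₁ * (q * v) - 1 = (p * u) * b₁)
    (h₂ : sbar₂ * (q * u) - 1 = (p * v) * b₂)
    (σ₁ σ₂ : Matrix (Fin 2) (Fin 2) ℝ)
    (hσ₁ : σ₁ = !![(1 : ℝ), (b₁ : ℝ); ((p * u : ℤ) : ℝ), ((sbar₁ * (q * v) : ℤ) : ℝ)] *
      !![Real.sqrt ((q * v : ℤ) : ℝ), 0; 0, (Real.sqrt ((q * v : ℤ) : ℝ))⁻¹])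
    (hσ₂ : σ₂ = !![(1 : ℝ), (b₂ : ℝ); ((p * v : ℤ) : ℝ), ((sbar₂ * (q * u) : ℤ) : ℝ)] *
      !![Real.sqrt ((q * u : ℤ) : ℝ), 0; 0, (Real.sqrt ((q * u : ℤ) : ℝ))⁻¹])
    (γ : ℝ) (hγ : 0 < γ) :
    (∃ g : Matrix (Fin 2) (Fin 2) ℤ, g.det = 1 ∧ (p * q * u * v) ∣ g 1 0 ∧
        (σ₁⁻¹ * g.map (Int.cast : ℤ → ℝ) * σ₂) 1 0 = γ) ↔
      ∃ c : ℤ, 0 < c ∧ (p * q) ∣ c ∧ IsCoprime c (u * v) ∧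
        γ = (c : ℝ) * Real.sqrt ((u * v : ℤ) : ℝ) := by
  have hp0 : (0:ℝ) < (p:ℝ) := by exact_mod_cast hp
  have hq0 : (0:ℝ) < (q:ℝ) := by exact_mod_cast hq
  have hu0 : (0:ℝ) < (u:ℝ) := by exact_mod_cast hu
  have hv0 : (0:ℝ) < (v:ℝ) := by exact_mod_cast hv
  have hs : 0 < Real.sqrt ((q * v : ℤ) : ℝ) := Real.sqrt_pos.2 (by push_cast; positivity)
  have hw : 0 < Real.sqrt ((u * v : ℤ) : ℝ) := Real.sqrt_pos.2 (by push_cast; positivity)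
  have hst : Real.sqrt ((q * v : ℤ) : ℝ) * Real.sqrt ((q * u : ℤ) : ℝ) =
      (q : ℝ) * Real.sqrt ((u * v : ℤ) : ℝ) := by
    push_cast
    rw [← Real.sqrt_mul (by positivity),
      show ((q:ℝ) * v) * ((q:ℝ) * u) = (q:ℝ)^2 * ((u:ℝ) * (v:ℝ)) by ring,
      Real.sqrt_mul (by positivity), Real.sqrt_sq hq0.le]
  have hd₁ : ((sbar₁ * (q * v) : ℤ) : ℝ) - ((p * u : ℤ) : ℝ) * (b₁ : ℝ) = 1 := by
    have h : sbar₁ * (q * v) - (p * u) * b₁ = 1 := by linarith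
    exact_mod_cast h
  constructor
  · rintro ⟨g, hgdet, ⟨n, hn⟩, hgγ⟩
    rw [Matrix.det_fin_two] at hgdet
    set a := g 0 0 with ha; set b := g 0 1 with hb; set c' := g 1 0 with hc'
    set d := g 1 1 with hd
    have hmap : g.map (Int.cast : ℤ → ℝ) = !![(a : ℝ), (b : ℝ); (c' : ℝ), (d : ℝ)] := by
      rw [Matrix.eta_fin_two (g.map _)]; simp [Matrix.map_apply]; exact ⟨⟨rfl, rfl⟩, rfl, rfl⟩
    rw [hmap, entry_aux _ _ _ _ _ _ _ _ hs hd₁ σ₁ σ₂ hσ₁ hσ₂, hst] at hgγ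
    set e : ℤ := q * (c' - p * u * a - p * u * (p * v) * b + p * v * d) with he
    have hγe : γ = (e : ℝ) * Real.sqrt ((u * v : ℤ) : ℝ) := by
      rw [← hgγ, he]
      push_cast
      ring
    have hepos : 0 < e := by
      rcases lt_trichotomy e 0 with h | h | h
      · exfalso
        have he' : (e : ℝ) < 0 := by exact_mod_cast h
        nlinarith [hγe, hγ, hw]
      · exfalso; rw [hγe, h] at hγ; simp at hγ
      · exact h
    have hdetM :
        (sbar₁ * (q*v) * (a + p*v*b) - b₁ * (c' + p*v*d)) *
          ((c' - p*u*a) * b₂ + (d - p*u*b) * (sbar₂*(q*u))) -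
        ((sbar₁*(q*v)*a - b₁*c') * b₂ + (sbar₁*(q*v)*b - b₁*d) * (sbar₂*(q*u))) *
          (c' - p*u*a - p*u*(p*v)*b + p*v*d) = 1 := by
      linear_combination ((sbar₂*(q*u) - p*v*b₂) * (a*d - b*c')) * h₁ +
        (a*d - b*c') * h₂ + hgdet
    have hM22 : (c' - p*u*a) * b₂ + (d - p*u*b) * (sbar₂*(q*u)) =
        u * (p*(q*v*n - a)*b₂ + (d - p*u*b)*(sbar₂*q)) := by
      linear_combination b₂ * hn
    have hM11 : sbar₁ * (q*v) * (a + p*v*b) - b₁ * (c' + p*v*d) =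
        v * (sbar₁*q*(a + p*v*b) - b₁*(p*q*u*n + p*d)) := by
      linear_combination (-b₁) * hn
    have hcop_u : IsCoprime (c' - p*u*a - p*u*(p*v)*b + p*v*d) u := by
      refine ⟨-((sbar₁*(q*v)*a - b₁*c') * b₂ + (sbar₁*(q*v)*b - b₁*d) * (sbar₂*(q*u))),
        (p*(q*v*n - a)*b₂ + (d - p*u*b)*(sbar₂*q)) *
          (sbar₁ * (q*v) * (a + p*v*b) - b₁ * (c' + p*v*d)), ?_⟩
      linear_combination hdetM -
        (sbar₁ * (q*v) * (a + p*v*b) - b₁ * (c' + p*v*d)) * hM22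
    have hcop_v : IsCoprime (c' - p*u*a - p*u*(p*v)*b + p*v*d) v := by
      refine ⟨-((sbar₁*(q*v)*a - b₁*c') * b₂ + (sbar₁*(q*v)*b - b₁*d) * (sbar₂*(q*u))),
        (sbar₁*q*(a + p*v*b) - b₁*(p*q*u*n + p*d)) *
          ((c' - p*u*a) * b₂ + (d - p*u*b) * (sbar₂*(q*u))), ?_⟩
      linear_combination hdetM -
        ((c' - p*u*a) * b₂ + (d - p*u*b) * (sbar₂*(q*u))) * hM11
    refine ⟨e, hepos, ⟨q*u*v*n - u*a - p*u*v*b + v*d, by rw [he]; linear_combination q * hn⟩,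
      ?_, hγe⟩
    exact (hqu.mul_left hcop_u).mul_right (hqv.mul_left hcop_v)
  · rintro ⟨c, hc0, ⟨k, hk⟩, hccop, hγc⟩
    obtain ⟨x, y, hxy⟩ := hccop.symm
    set g : Matrix (Fin 2) (Fin 2) ℤ :=
      !![1, b₁; p*u, sbar₁*(q*v)] *
        (!![v*x, -(q*y); p*k, u] * !![sbar₂*(q*u), -b₂; -(p*v), 1]) with hg
    have hmap : g.map (Int.cast : ℤ → ℝ) =
        !![(g 0 0 : ℝ), (g 0 1 : ℝ); (g 1 0 : ℝ), (g 1 1 : ℝ)] := by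
      rw [Matrix.eta_fin_two (g.map _)]; simp [Matrix.map_apply]
    have hqG : q * (g 1 0 - p*u * g 0 0 - p*u*(p*v) * g 0 1 + p*v * g 1 1) = c := by
      simp only [hg, Matrix.mul_fin_two, Matrix.cons_val', Matrix.cons_val_zero,
        Matrix.cons_val_one, Matrix.head_cons, Matrix.empty_val',
        Matrix.cons_val_fin_one, Matrix.head_fin_const, Matrix.of_apply]
      linear_combination (q*p*k*(sbar₂*(q*u) - p*v*b₂)) * h₁ + q*p*k * h₂ - hk
    refine ⟨g, ?_, ⟨x*sbar₂*u + p*y + sbar₁*sbar₂*q*k - sbar₁*v, ?_⟩, ?_⟩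
    · rw [hg, Matrix.det_mul, Matrix.det_mul, Matrix.det_fin_two_of,
        Matrix.det_fin_two_of, Matrix.det_fin_two_of]
      linear_combination ((v*x*u + q*y*(p*k)) * (sbar₂*(q*u)*1 - (-b₂)*(-(p*v)))) * h₁ +
        (sbar₂*(q*u)*1 - (-b₂)*(-(p*v))) * hxy -
        y*(sbar₂*(q*u)*1 - (-b₂)*(-(p*v))) * hk + h₂
    · simp only [hg, Matrix.mul_fin_two, Matrix.cons_val', Matrix.cons_val_zero,
        Matrix.cons_val_one, Matrix.head_cons, Matrix.empty_val',
        Matrix.cons_val_fin_one, Matrix.head_fin_const, Matrix.of_apply]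
      ring
    · rw [hmap, entry_aux _ _ _ _ _ _ _ _ hs hd₁ σ₁ σ₂ hσ₁ hσ₂, hst, hγc]
      have hqG' : ((q * (g 1 0 - p*u * g 0 0 - p*u*(p*v) * g 0 1 + p*v * g 1 1) : ℤ) : ℝ)
          = (c : ℝ) := by exact_mod_cast congrArg (Int.cast : ℤ → ℝ) hqG
      push_cast at hqG' ⊢
      linear_combination Real.sqrt ((u:ℝ) * (v:ℝ)) * hqG'
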